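/- Let G be a finite simple graph and q a positive integer. The number of q-compatible pairs (σ, O), where O is an acyclic orientation of G and σ : V(G) → {1,...,q} satisfies σ(i) ≥ σ(j) for every directed edge i → j of O, equals (-1)^{|V(G)|} · π_G(-q), where π_G is the chromatic polynomial of G. -/

import Mathlib

/-- `O` is an orientation of the simple graph `G`: it orients exactly the edges of `G`,
each in exactly one direction. -/
def IsOrientation {V : Type*} (G : SimpleGraph V) (O : V → V → Prop) : Prop :=
  (∀ u v, O u v → G.Adj u v) ∧ (∀ u v, G.Adj u v → (O u v ↔ ¬ O v u))

/-- An orientation is acyclic if it admits no directed cycle. -/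
def IsAcyclicRel {V : Type*} (O : V → V → Prop) : Prop :=
  ∀ v, ¬ Relation.TransGen O v v

open Relation

section Aux
variable {V : Type*}

abbrev Pairs (G : SimpleGraph V) (q : ℕ) :=
  {p : (V → Fin q) × (V → V → Prop) //
    IsOrientation G p.2 ∧ IsAcyclicRel p.2 ∧ ∀ u v, p.2 u v → p.1 v ≤ p.1 u}

abbrev Cols (G : SimpleGraph V) (c : ℕ) :=
  {f : V → Fin c // ∀ u v, G.Adj u v → f u ≠ f v}

lemma card_split (α : Type*) [Finite α] (p : α → Prop) :
    Nat.card α = Nat.card {x // p x} + Nat.card {x // ¬ p x} := by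
  classical
  rw [← Nat.card_sum]
  exact (Nat.card_congr (Equiv.sumCompl p)).symm

lemma le_of_path {q : ℕ} {σ : V → Fin q} {O : V → V → Prop}
    (hc : ∀ u v, O u v → σ v ≤ σ u) {a b : V} (h : TransGen O a b) : σ b ≤ σ a := by
  induction h with
  | single h => exact hc _ _ h
  | tail _ h ih => exact le_trans (hc _ _ h) ih

lemma transGen_or_pair {O : V → V → Prop} {u v : V} {x y : V}
    (h : TransGen (fun a b => O a b ∨ (a = u ∧ b = v)) x y) :
    TransGen O x y ∨ (ReflTransGen O x u ∧ ReflTransGen O v y) := by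
  induction h with
  | single h =>
    rcases h with h | ⟨rfl, rfl⟩
    · exact Or.inl (TransGen.single h)
    · exact Or.inr ⟨ReflTransGen.refl, ReflTransGen.refl⟩
  | tail hxy hstep ih =>
    rcases hstep with h | ⟨rfl, rfl⟩
    · rcases ih with ih | ⟨h1, h2⟩
      · exact Or.inl (ih.tail h)
      · exact Or.inr ⟨h1, h2.tail h⟩
    · rcases ih with ih | ⟨h1, h2⟩
      · exact Or.inr ⟨ih.to_reflTransGen, ReflTransGen.refl⟩
      · exact Or.inr ⟨h1, ReflTransGen.refl⟩

lemma acyclic_insert {O : V → V → Prop} {u v : V} (hO : IsAcyclicRel O)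
    (hvu : ¬ TransGen O v u) (hne : u ≠ v) :
    IsAcyclicRel (fun a b => O a b ∨ (a = u ∧ b = v)) := by
  intro w hw
  rcases transGen_or_pair hw with h | ⟨h1, h2⟩
  · exact hO w h
  · rcases Relation.reflTransGen_iff_eq_or_transGen.mp (h2.trans h1) with h | h
    · exact hne h
    · exact hvu h

def Contract (G : SimpleGraph V) (u v : V) : SimpleGraph {x : V // x ≠ v} where
  Adj a b := a ≠ b ∧ (G.Adj ↑a ↑b ∨ (↑a = u ∧ G.Adj v ↑b) ∨ (↑b = u ∧ G.Adj ↑a v))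
  symm := by
    constructor
    rintro a b ⟨hne, h⟩
    refine ⟨hne.symm, ?_⟩
    rcases h with h | ⟨h1, h2⟩ | ⟨h1, h2⟩
    · exact Or.inl h.symm
    · exact Or.inr (Or.inr ⟨h1, h2.symm⟩)
    · exact Or.inr (Or.inl ⟨h1, h2.symm⟩)
  loopless := by constructor; rintro a ⟨hne, -⟩; exact hne rfl

/-- path analysis for the contraction relation -/
lemma contract_path {O : V → V → Prop} {u v : V}
    (hac : IsAcyclicRel O) (huv' : ¬ TransGen O u v) (hvu' : ¬ TransGen O v u)
    {x y : V}
    (h : TransGen (fun a b => O a b ∨ (a = u ∧ O v b) ∨ (b = u ∧ O a v)) x y) :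
    (∃ x' y', (x' = x ∨ (x = u ∧ x' = v)) ∧ (y' = y ∨ (y = u ∧ y' = v)) ∧ TransGen O x' y')
    ∨ (∃ x' y', (x' = x ∨ (x = u ∧ x' = v)) ∧ (y' = y ∨ (y = u ∧ y' = v)) ∧
        TransGen O x' u ∧ TransGen O v y')
    ∨ (∃ x' y', (x' = x ∨ (x = u ∧ x' = v)) ∧ (y' = y ∨ (y = u ∧ y' = v)) ∧
        TransGen O x' v ∧ TransGen O u y') := by
  induction h with
  | single h =>
    rcases h with h | ⟨rfl, h⟩ | ⟨rfl, h⟩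
    · exact Or.inl ⟨x, _, Or.inl rfl, Or.inl rfl, TransGen.single h⟩
    · exact Or.inl ⟨v, _, Or.inr ⟨rfl, rfl⟩, Or.inl rfl, TransGen.single h⟩
    · exact Or.inl ⟨x, v, Or.inl rfl, Or.inr ⟨rfl, rfl⟩, TransGen.single h⟩
  | @tail b c hxb hstep ih =>
    -- the step gives an O-edge b'' → c' with b'' a lift of b and c' a lift of c
    obtain ⟨b'', c', hb'', hc', hedge⟩ :
        ∃ b'' c', (b'' = b ∨ (b = u ∧ b'' = v)) ∧ (c' = c ∨ (c = u ∧ c' = v)) ∧ O b'' c' := by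
      rcases hstep with h | ⟨rfl, h⟩ | ⟨rfl, h⟩
      · exact ⟨b, c, Or.inl rfl, Or.inl rfl, h⟩
      · exact ⟨v, c, Or.inr ⟨rfl, rfl⟩, Or.inl rfl, h⟩
      · exact ⟨b, v, Or.inl rfl, Or.inr ⟨rfl, rfl⟩, h⟩
    rcases ih with ⟨x', y', hx, hy, hp⟩ | ⟨x', y', hx, hy, h1, h2⟩ | ⟨x', y', hx, hy, h1, h2⟩
    · -- case A
      by_cases hyb : y' = b''
      · exact Or.inl ⟨x', c', hx, hc', hp.tail (hyb ▸ hedge)⟩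
      · -- a switch happens at b (= u)
        rcases hy with rfl | ⟨rfl, rfl⟩
        · rcases hb'' with rfl | ⟨rfl, rfl⟩
          · exact absurd rfl hyb
          · -- y' = b = u, b'' = v : arrive at u, leave from v
            exact Or.inr (Or.inl ⟨x', c', hx, hc', hp, TransGen.single hedge⟩)
        · rcases hb'' with rfl | ⟨-, rfl⟩
          · -- y' = v (lift of b = u), b'' = b = u : arrive at v, leave from u
            exact Or.inr (Or.inr ⟨x', c', hx, hc', hp, TransGen.single hedge⟩)
          · exact absurd rfl hyb
    · -- case B : already one switch (…→ u, v →…)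
      by_cases hyb : y' = b''
      · exact Or.inr (Or.inl ⟨x', c', hx, hc', h1, h2.tail (hyb ▸ hedge)⟩)
      · rcases hy with rfl | ⟨rfl, rfl⟩
        · rcases hb'' with rfl | ⟨rfl, rfl⟩
          · exact absurd rfl hyb
          · exact absurd h2 hvu'
        · rcases hb'' with rfl | ⟨-, rfl⟩
          · exact absurd h2 (hac _)
          · exact absurd rfl hyb
    · -- case B'
      by_cases hyb : y' = b''
      · exact Or.inr (Or.inr ⟨x', c', hx, hc', h1, h2.tail (hyb ▸ hedge)⟩)
      · rcases hy with rfl | ⟨rfl, rfl⟩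
        · rcases hb'' with rfl | ⟨rfl, rfl⟩
          · exact absurd rfl hyb
          · exact absurd h2 (hac _)
        · rcases hb'' with rfl | ⟨-, rfl⟩
          · exact absurd h2 huv'
          · exact absurd rfl hyb

lemma contract_acyclic {O : V → V → Prop} {u v : V}
    (hac : IsAcyclicRel O) (huv' : ¬ TransGen O u v) (hvu' : ¬ TransGen O v u)
    {x : V}
    (h : TransGen (fun a b => O a b ∨ (a = u ∧ O v b) ∨ (b = u ∧ O a v)) x x) : False := by
  rcases contract_path hac huv' hvu' h with
    ⟨x', y', hx, hy, hp⟩ | ⟨x', y', hx, hy, h1, h2⟩ | ⟨x', y', hx, hy, h1, h2⟩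
  · rcases hx with rfl | ⟨rfl, rfl⟩ <;> rcases hy with h | ⟨h', rfl⟩
    · exact hac _ (h ▸ hp)
    · exact huv' (h' ▸ hp)
    · exact hvu' (h ▸ hp)
    · exact hac _ hp
  · rcases hx with rfl | ⟨rfl, rfl⟩
    · rcases hy with rfl | ⟨rfl, rfl⟩
      · exact hvu' (h2.trans h1)
      · exact hac _ h1
    · exact hvu' h1
  · rcases hx with rfl | ⟨rfl, rfl⟩
    · rcases hy with rfl | ⟨rfl, rfl⟩
      · exact huv' (h2.trans h1)
      · exact huv' h2  -- x = u : h2 : TransGen O u y', y' lift of u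
    · exact hac _ h1
end Aux

section Del
variable {V : Type*} [DecidableEq V]

/-- The projection `V → V \ {v}` sending `v` to `u`. -/
def proj (u v : V) (hne : u ≠ v) : V → {x : V // x ≠ v} :=
  fun x => if h : x = v then ⟨u, hne⟩ else ⟨x, h⟩

lemma proj_v (u v : V) (hne : u ≠ v) : proj u v hne v = ⟨u, hne⟩ := dif_pos rfl

lemma proj_ne (u v : V) (hne : u ≠ v) {x : V} (h : x ≠ v) : proj u v hne x = ⟨x, h⟩ :=
  dif_neg h

lemma proj_coe (u v : V) (hne : u ≠ v) (a : {x : V // x ≠ v}) : proj u v hne ↑a = a := by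
  rw [proj_ne u v hne a.2]

lemma proj_u (u v : V) (hne : u ≠ v) : proj u v hne u = ⟨u, hne⟩ := by
  rw [proj_ne u v hne hne]

variable (G Gd : SimpleGraph V) (u v : V)

def colEquiv1 (c : ℕ) (huv : G.Adj u v)
    (hGd : ∀ a b, Gd.Adj a b ↔ G.Adj a b ∧ ¬(a = u ∧ b = v) ∧ ¬(a = v ∧ b = u)) :
    {f : Cols Gd c // f.1 u ≠ f.1 v} ≃ Cols G c where
  toFun f := ⟨f.1.1, by
    intro a b hab
    by_cases h : (a = u ∧ b = v) ∨ (a = v ∧ b = u)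
    · rcases h with ⟨rfl, rfl⟩ | ⟨rfl, rfl⟩
      · exact f.2
      · exact f.2.symm
    · exact f.1.2 a b ((hGd a b).mpr
        ⟨hab, fun h' => h (Or.inl h'), fun h' => h (Or.inr h')⟩)⟩
  invFun g := ⟨⟨g.1, fun a b hab => g.2 a b ((hGd a b).mp hab).1⟩, g.2 u v huv⟩
  left_inv f := Subtype.ext (Subtype.ext rfl)
  right_inv g := rfl

def colEquiv2 (c : ℕ) (huv : G.Adj u v)
    (hGd : ∀ a b, Gd.Adj a b ↔ G.Adj a b ∧ ¬(a = u ∧ b = v) ∧ ¬(a = v ∧ b = u)) :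
    {f : Cols Gd c // f.1 u = f.1 v} ≃ Cols (Contract G u v) c where
  toFun f := ⟨fun a => f.1.1 ↑a, by
    rintro a b ⟨hne, h | ⟨hau, hvb⟩ | ⟨hbu, hav⟩⟩
    · exact f.1.2 ↑a ↑b ((hGd _ _).mpr ⟨h, fun h' => b.2 h'.2, fun h' => a.2 h'.1⟩)
    · have hb : Gd.Adj v ↑b := (hGd _ _).mpr ⟨hvb, fun h' => huv.ne h'.1.symm,
        fun h' => hne (Subtype.ext (hau.trans h'.2.symm))⟩
      have h2 := f.1.2 v ↑b hb
      show f.1.1 ↑a ≠ f.1.1 ↑b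
      rw [hau, f.2]
      exact h2
    · have ha : Gd.Adj ↑a v := (hGd _ _).mpr
        ⟨hav, fun h' => hne (Subtype.ext (h'.1.trans hbu.symm)), fun h' => huv.ne h'.2.symm⟩
      have h2 := f.1.2 ↑a v ha
      show f.1.1 ↑a ≠ f.1.1 ↑b
      rw [hbu, f.2]
      exact h2⟩
  invFun g := ⟨⟨fun x => g.1 (proj u v huv.ne x), by
      intro a b hab
      obtain ⟨hGab, h1, h2⟩ := (hGd a b).mp hab
      have hab' : a ≠ b := hGab.ne
      show g.1 (proj u v huv.ne a) ≠ g.1 (proj u v huv.ne b)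
      intro heq
      by_cases ha : a = v
      · have hbu : b ≠ u := fun h => h2 ⟨ha, h⟩
        have hbv : b ≠ v := fun h => hab' (ha.trans h.symm)
        rw [ha, proj_v, proj_ne u v huv.ne hbv] at heq
        exact g.2 ⟨u, huv.ne⟩ ⟨b, hbv⟩
          ⟨fun h => hbu (congrArg Subtype.val h).symm,
           Or.inr (Or.inl ⟨rfl, ha ▸ hGab⟩)⟩ heq
      · by_cases hb : b = v
        · have hau : a ≠ u := fun h => h1 ⟨h, hb⟩
          rw [hb, proj_v, proj_ne u v huv.ne ha] at heq
          exact g.2 ⟨a, ha⟩ ⟨u, huv.ne⟩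
            ⟨fun h => hau (congrArg Subtype.val h),
             Or.inr (Or.inr ⟨rfl, hb ▸ hGab⟩)⟩ heq
        · rw [proj_ne u v huv.ne ha, proj_ne u v huv.ne hb] at heq
          exact g.2 ⟨a, ha⟩ ⟨b, hb⟩
            ⟨fun h => hab' (congrArg Subtype.val h), Or.inl hGab⟩ heq⟩,
    by show g.1 (proj u v huv.ne u) = g.1 (proj u v huv.ne v); rw [proj_u, proj_v]⟩
  left_inv f := by
    apply Subtype.ext; apply Subtype.ext
    funext x
    show f.1.1 ↑(proj u v huv.ne x) = f.1.1 x
    by_cases hx : x = v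
    · rw [hx, proj_v]; exact f.2
    · rw [proj_ne u v huv.ne hx]
  right_inv g := by
    apply Subtype.ext
    funext a
    show g.1 (proj u v huv.ne ↑a) = g.1 a
    rw [proj_coe]

lemma card_cols (c : ℕ) [Finite V] (huv : G.Adj u v)
    (hGd : ∀ a b, Gd.Adj a b ↔ G.Adj a b ∧ ¬(a = u ∧ b = v) ∧ ¬(a = v ∧ b = u)) :
    Nat.card (Cols Gd c) = Nat.card (Cols G c) + Nat.card (Cols (Contract G u v) c) := by
  rw [card_split (Cols Gd c) (fun f => f.1 u ≠ f.1 v)]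
  congr 1
  · exact Nat.card_congr (colEquiv1 G Gd u v c huv hGd)
  · exact Nat.card_congr ((Equiv.subtypeEquivRight (fun f => not_ne_iff)).trans
      (colEquiv2 G Gd u v c huv hGd))

end Del

section PairsDel
variable {V : Type*}

/-- Restricting an acyclic compatible pair of `G` whose orientation contains `u → v`
to the graph with edge `uv` deleted. -/
def pairEquivDel (G Gd : SimpleGraph V) (u v : V) (q : ℕ) (huv : G.Adj u v)
    (hGd : ∀ a b, Gd.Adj a b ↔ G.Adj a b ∧ ¬(a = u ∧ b = v) ∧ ¬(a = v ∧ b = u)) :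
    {p : Pairs G q // p.1.2 u v} ≃
      {p : Pairs Gd q // p.1.1 v ≤ p.1.1 u ∧ ¬ Relation.TransGen p.1.2 v u} where
  toFun p := by
    obtain ⟨⟨⟨σ, O⟩, hor, hac, hcomp⟩, hOuv⟩ := p
    refine ⟨⟨⟨σ, fun a b => O a b ∧ ¬(a = u ∧ b = v)⟩, ⟨?_, ?_⟩, ?_, ?_⟩, ?_, ?_⟩
    · rintro a b ⟨hab, hne⟩
      refine (hGd a b).mpr ⟨hor.1 a b hab, hne, ?_⟩
      rintro ⟨rfl, rfl⟩
      exact ((hor.2 _ _ huv).mp hOuv) hab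
    · intro a b hab
      obtain ⟨hab, h1, h2⟩ := (hGd a b).mp hab
      constructor
      · rintro ⟨hO, -⟩ ⟨hO', -⟩
        exact ((hor.2 a b hab).mp hO) hO'
      · intro h
        refine ⟨(hor.2 a b hab).mpr (fun hO' => h ⟨hO', fun hc => h2 ⟨hc.2, hc.1⟩⟩), h1⟩
    · intro w hw
      exact hac w (TransGen.mono (fun a b h => h.1) _ _ hw)
    · intro a b hab
      exact hcomp a b hab.1
    · exact hcomp u v hOuv
    · intro h
      exact hac u ((Relation.TransGen.single hOuv).trans (TransGen.mono (fun a b h => h.1) _ _ h))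
  invFun p := by
    obtain ⟨⟨⟨σ, O⟩, hor, hac, hcomp⟩, hle, hnp⟩ := p
    refine ⟨⟨⟨σ, fun a b => O a b ∨ (a = u ∧ b = v)⟩, ⟨?_, ?_⟩, ?_, ?_⟩, Or.inr ⟨rfl, rfl⟩⟩
    · rintro a b (hab | ⟨rfl, rfl⟩)
      · exact ((hGd a b).mp (hor.1 a b hab)).1
      · exact huv
    · intro a b hab
      by_cases h : (a = u ∧ b = v) ∨ (a = v ∧ b = u)
      · rcases h with ⟨rfl, rfl⟩ | ⟨rfl, rfl⟩
        · constructor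
          · rintro - (hO | ⟨rfl, -⟩)
            · exact hnp (Relation.TransGen.single hO)
            · exact huv.ne rfl
          · intro _; exact Or.inr ⟨rfl, rfl⟩
        · constructor
          · rintro (hO | ⟨rfl, -⟩)
            · exact absurd (Relation.TransGen.single hO) hnp
            · exact absurd rfl huv.ne
          · intro h; exact absurd (Or.inr ⟨rfl, rfl⟩) h
      · have hGdab : Gd.Adj a b := (hGd a b).mpr
          ⟨hab, fun h' => h (Or.inl h'), fun h' => h (Or.inr h')⟩
        have hGdba : Gd.Adj b a := hGdab.symm
        constructor
        · rintro (hO | hp) (hO' | hp')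
          · exact ((hor.2 a b hGdab).mp hO) hO'
          · exact h (Or.inr ⟨hp'.2, hp'.1⟩)
          · exact h (Or.inl hp)
          · exact h (Or.inl hp)
        · intro hn
          left
          refine (hor.2 a b hGdab).mpr (fun hO' => hn (Or.inl hO'))
    · exact acyclic_insert hac hnp huv.ne
    · rintro a b (hab | ⟨rfl, rfl⟩)
      · exact hcomp a b hab
      · exact hle
  left_inv p := by
    obtain ⟨⟨⟨σ, O⟩, hor, hac, hcomp⟩, hOuv⟩ := p
    apply Subtype.ext; apply Subtype.ext
    refine Prod.ext rfl ?_
    funext a b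
    apply propext
    constructor
    · rintro (⟨h, -⟩ | ⟨rfl, rfl⟩)
      · exact h
      · exact hOuv
    · intro h
      by_cases h' : a = u ∧ b = v
      · exact Or.inr h'
      · exact Or.inl ⟨h, h'⟩
  right_inv p := by
    obtain ⟨⟨⟨σ, O⟩, hor, hac, hcomp⟩, hle, hnp⟩ := p
    apply Subtype.ext; apply Subtype.ext
    refine Prod.ext rfl ?_
    funext a b
    apply propext
    constructor
    · rintro ⟨hO | ⟨rfl, rfl⟩, hne⟩
      · exact hO
      · exact absurd rfl (not_and.mp hne rfl)
    · intro h
      refine ⟨Or.inl h, ?_⟩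
      rintro ⟨rfl, rfl⟩
      obtain ⟨-, h1, -⟩ := (hGd _ _).mp (hor.1 _ _ h)
      exact h1 ⟨rfl, rfl⟩

end PairsDel

section CardPairs
variable {V : Type*}

lemma card_pairs [Finite V] (G Gd : SimpleGraph V) (u v : V) (q : ℕ) (huv : G.Adj u v)
    (hGd : ∀ a b, Gd.Adj a b ↔ G.Adj a b ∧ ¬(a = u ∧ b = v) ∧ ¬(a = v ∧ b = u)) :
    Nat.card (Pairs G q) = Nat.card (Pairs Gd q) +
      Nat.card {p : Pairs Gd q // p.1.1 u = p.1.1 v ∧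
        ¬ Relation.TransGen p.1.2 u v ∧ ¬ Relation.TransGen p.1.2 v u} := by
  classical
  have htot : ∀ p : Pairs Gd q,
      ¬ (p.1.1 v ≤ p.1.1 u ∧ ¬ Relation.TransGen p.1.2 v u) →
      (p.1.1 u ≤ p.1.1 v ∧ ¬ Relation.TransGen p.1.2 u v) := by
    intro p h
    by_cases hle : p.1.1 v ≤ p.1.1 u
    · have hT : Relation.TransGen p.1.2 v u := by
        by_contra h'
        exact h ⟨hle, h'⟩
      exact ⟨le_of_path p.2.2.2 hT, fun h' => p.2.2.1 u (h'.trans hT)⟩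
    · exact ⟨le_of_not_ge hle, fun h' => hle (le_of_path p.2.2.2 h')⟩
  have e1 : Nat.card (Pairs G q) =
      Nat.card {p : Pairs Gd q // p.1.1 v ≤ p.1.1 u ∧ ¬ Relation.TransGen p.1.2 v u} +
      Nat.card {p : Pairs Gd q // p.1.1 u ≤ p.1.1 v ∧ ¬ Relation.TransGen p.1.2 u v} := by
    rw [card_split (Pairs G q) (fun p => p.1.2 u v)]
    congr 1
    · exact Nat.card_congr (pairEquivDel G Gd u v q huv hGd)
    · refine Nat.card_congr (Equiv.trans (Equiv.subtypeEquivRight ?_)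
        (pairEquivDel G Gd v u q huv.symm ?_))
      · intro p
        exact (iff_not_comm.mp (p.2.1.2 u v huv)).symm
      · intro a b
        rw [hGd a b]
        tauto
  have e2 : Nat.card {p : Pairs Gd q // p.1.1 u ≤ p.1.1 v ∧ ¬ Relation.TransGen p.1.2 u v} =
      Nat.card {p : Pairs Gd q // (p.1.1 u ≤ p.1.1 v ∧ ¬ Relation.TransGen p.1.2 u v) ∧
        (p.1.1 v ≤ p.1.1 u ∧ ¬ Relation.TransGen p.1.2 v u)} +
      Nat.card {p : Pairs Gd q // (p.1.1 u ≤ p.1.1 v ∧ ¬ Relation.TransGen p.1.2 u v) ∧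
        ¬ (p.1.1 v ≤ p.1.1 u ∧ ¬ Relation.TransGen p.1.2 v u)} := by
    rw [card_split _ (fun x : {p : Pairs Gd q // p.1.1 u ≤ p.1.1 v ∧
      ¬ Relation.TransGen p.1.2 u v} => x.1.1.1 v ≤ x.1.1.1 u ∧ ¬ Relation.TransGen x.1.1.2 v u)]
    congr 1
    · exact Nat.card_congr (Equiv.subtypeSubtypeEquivSubtypeInter
        (fun p : Pairs Gd q => p.1.1 u ≤ p.1.1 v ∧ ¬ Relation.TransGen p.1.2 u v)
        (fun p => p.1.1 v ≤ p.1.1 u ∧ ¬ Relation.TransGen p.1.2 v u))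
    · exact Nat.card_congr (Equiv.subtypeSubtypeEquivSubtypeInter
        (fun p : Pairs Gd q => p.1.1 u ≤ p.1.1 v ∧ ¬ Relation.TransGen p.1.2 u v)
        (fun p => ¬ (p.1.1 v ≤ p.1.1 u ∧ ¬ Relation.TransGen p.1.2 v u)))
  have e3 : Nat.card {p : Pairs Gd q // (p.1.1 u ≤ p.1.1 v ∧ ¬ Relation.TransGen p.1.2 u v) ∧
        ¬ (p.1.1 v ≤ p.1.1 u ∧ ¬ Relation.TransGen p.1.2 v u)} =
      Nat.card {p : Pairs Gd q // ¬ (p.1.1 v ≤ p.1.1 u ∧ ¬ Relation.TransGen p.1.2 v u)} :=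
    Nat.card_congr (Equiv.subtypeEquivRight
      (fun p => ⟨fun h => h.2, fun h => ⟨htot p h, h⟩⟩))
  have e4 : Nat.card (Pairs Gd q) =
      Nat.card {p : Pairs Gd q // p.1.1 v ≤ p.1.1 u ∧ ¬ Relation.TransGen p.1.2 v u} +
      Nat.card {p : Pairs Gd q // ¬ (p.1.1 v ≤ p.1.1 u ∧ ¬ Relation.TransGen p.1.2 v u)} :=
    card_split _ _
  have e5 : Nat.card {p : Pairs Gd q // (p.1.1 u ≤ p.1.1 v ∧ ¬ Relation.TransGen p.1.2 u v) ∧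
        (p.1.1 v ≤ p.1.1 u ∧ ¬ Relation.TransGen p.1.2 v u)} =
      Nat.card {p : Pairs Gd q // p.1.1 u = p.1.1 v ∧
        ¬ Relation.TransGen p.1.2 u v ∧ ¬ Relation.TransGen p.1.2 v u} :=
    Nat.card_congr (Equiv.subtypeEquivRight (fun p =>
      ⟨fun h => ⟨le_antisymm h.1.1 h.2.1, h.1.2, h.2.2⟩,
       fun h => ⟨⟨le_of_eq h.1, h.2.1⟩, ⟨le_of_eq h.1.symm, h.2.2⟩⟩⟩))
  omega

end CardPairs

section Con
set_option linter.unusedSectionVars false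
variable {V : Type*} [DecidableEq V]
open Relation

def conRel (u v : V) (O : V → V → Prop) : {x : V // x ≠ v} → {x : V // x ≠ v} → Prop :=
  fun a b => O ↑a ↑b ∨ (↑a = u ∧ O v ↑b) ∨ (↑b = u ∧ O ↑a v)

lemma conRel_excl {u v : V} {Gd : SimpleGraph V} {O : V → V → Prop}
    (hor : IsOrientation Gd O)
    (huv' : ¬ TransGen O u v) (hvu' : ¬ TransGen O v u)
    (a b : {x : V // x ≠ v}) : conRel u v O a b → ¬ conRel u v O b a := by
  have hexcl : ∀ x y, O x y → ¬ O y x := fun x y h h' =>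
    (hor.2 x y (hor.1 x y h)).mp h h'
  rintro (h1 | ⟨ha, h1⟩ | ⟨hb, h1⟩) (h2 | ⟨hb', h2⟩ | ⟨ha', h2⟩)
  · exact hexcl _ _ h1 h2
  · exact hvu' ((TransGen.single h2).tail (by rwa [hb'] at h1))
  · exact huv' ((TransGen.single (by rwa [ha'] at h1)).tail h2)
  · exact hvu' ((TransGen.single h1).tail (by rwa [ha] at h2))
  · exact hvu' (TransGen.single (by rwa [hb'] at h1))
  · exact hexcl _ _ h1 h2
  · exact huv' ((TransGen.single (by rwa [hb] at h2)).tail h1)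
  · exact hexcl _ _ h1 h2
  · exact huv' (TransGen.single (by rwa [ha'] at h1))

lemma conRel_total {u v : V} {G Gd : SimpleGraph V} {O : V → V → Prop}
    (hor : IsOrientation Gd O) (huv : G.Adj u v)
    (hGd : ∀ a b, Gd.Adj a b ↔ G.Adj a b ∧ ¬(a = u ∧ b = v) ∧ ¬(a = v ∧ b = u))
    (a b : {x : V // x ≠ v}) (hadj : (Contract G u v).Adj a b) :
    conRel u v O a b ∨ conRel u v O b a := by
  have htot : ∀ x y, Gd.Adj x y → O x y ∨ O y x := by
    intro x y h
    by_cases hx : O x y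
    · exact Or.inl hx
    · exact Or.inr ((hor.2 y x h.symm).mpr hx)
  obtain ⟨hne, h | ⟨hau, hvb⟩ | ⟨hbu, hav⟩⟩ := hadj
  · have hGdab : Gd.Adj ↑a ↑b := (hGd _ _).mpr ⟨h, fun h' => b.2 h'.2, fun h' => a.2 h'.1⟩
    rcases htot _ _ hGdab with h' | h'
    · exact Or.inl (Or.inl h')
    · exact Or.inr (Or.inl h')
  · have hGdvb : Gd.Adj v ↑b := (hGd _ _).mpr ⟨hvb, fun h' => huv.ne h'.1.symm,
      fun h' => hne (Subtype.ext (hau.trans h'.2.symm))⟩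
    rcases htot _ _ hGdvb with h' | h'
    · exact Or.inl (Or.inr (Or.inl ⟨hau, h'⟩))
    · exact Or.inr (Or.inr (Or.inr ⟨hau, h'⟩))
  · have hGdav : Gd.Adj ↑a v := (hGd _ _).mpr
      ⟨hav, fun h' => hne (Subtype.ext (h'.1.trans hbu.symm)), fun h' => huv.ne h'.2.symm⟩
    rcases htot _ _ hGdav with h' | h'
    · exact Or.inl (Or.inr (Or.inr ⟨hbu, h'⟩))
    · exact Or.inr (Or.inr (Or.inl ⟨hbu, h'⟩))

end Con

section Con2
set_option linter.unusedSectionVars false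
set_option maxHeartbeats 1000000
variable {V : Type*} [DecidableEq V]
open Relation

noncomputable def pairEquivCon (G Gd : SimpleGraph V) (u v : V) (q : ℕ) (huv : G.Adj u v)
    (hGd : ∀ a b, Gd.Adj a b ↔ G.Adj a b ∧ ¬(a = u ∧ b = v) ∧ ¬(a = v ∧ b = u)) :
    {p : Pairs Gd q // p.1.1 u = p.1.1 v ∧
      ¬ TransGen p.1.2 u v ∧ ¬ TransGen p.1.2 v u} ≃ Pairs (Contract G u v) q where
  toFun p := by
    obtain ⟨⟨⟨σ, O⟩, hor, hac, hcomp⟩, hσ, huv', hvu'⟩ := p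
    have hσ' : σ u = σ v := hσ
    refine ⟨⟨fun a => σ ↑a, conRel u v O⟩, ⟨?_, ?_⟩, ?_, ?_⟩
    · rintro a b (h1 | ⟨ha, h1⟩ | ⟨hb, h1⟩)
      · have h := ((hGd _ _).mp (hor.1 _ _ h1)).1
        exact ⟨fun he => h.ne (congrArg Subtype.val he), Or.inl h⟩
      · have hg := ((hGd _ _).mp (hor.1 _ _ h1)).1
        exact ⟨fun he => hvu' (TransGen.single (by rwa [← he, ha] at h1)),
          Or.inr (Or.inl ⟨ha, hg⟩)⟩
      · have hg := ((hGd _ _).mp (hor.1 _ _ h1)).1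
        exact ⟨fun he => huv' (TransGen.single (by rwa [he, hb] at h1)),
          Or.inr (Or.inr ⟨hb, hg⟩)⟩
    · intro a b hadj
      exact ⟨fun h h' => conRel_excl hor huv' hvu' a b h h',
        fun h => (conRel_total hor huv hGd a b hadj).resolve_right h⟩
    · intro w hw
      exact contract_acyclic hac huv' hvu'
        (TransGen.lift Subtype.val (fun a b h => h) _ _ hw)
    · rintro a b (h1 | ⟨ha, h1⟩ | ⟨hb, h1⟩)
      · exact hcomp _ _ h1
      · show σ ↑b ≤ σ ↑a
        rw [ha, hσ']
        exact hcomp _ _ h1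
      · show σ ↑b ≤ σ ↑a
        rw [hb, hσ']
        exact hcomp _ _ h1
  invFun p := by
    obtain ⟨⟨τ, Ot⟩, hor, hac, hcomp⟩ := p
    have hπadj : ∀ a b, Gd.Adj a b →
        (Contract G u v).Adj (proj u v huv.ne a) (proj u v huv.ne b) := by
      intro a b hab
      obtain ⟨hG, h1, h2⟩ := (hGd a b).mp hab
      by_cases ha : a = v
      · have hbu : b ≠ u := fun h => h2 ⟨ha, h⟩
        have hbv : b ≠ v := fun h => hG.ne (ha.trans h.symm)
        rw [ha, proj_v, proj_ne u v huv.ne hbv]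
        exact ⟨fun he => hbu (congrArg Subtype.val he).symm,
          Or.inr (Or.inl ⟨rfl, ha ▸ hG⟩)⟩
      · by_cases hb : b = v
        · have hau : a ≠ u := fun h => h1 ⟨h, hb⟩
          rw [hb, proj_v, proj_ne u v huv.ne ha]
          exact ⟨fun he => hau (congrArg Subtype.val he),
            Or.inr (Or.inr ⟨rfl, hb ▸ hG⟩)⟩
        · rw [proj_ne u v huv.ne ha, proj_ne u v huv.ne hb]
          exact ⟨fun he => hG.ne (congrArg Subtype.val he), Or.inl hG⟩
    refine ⟨⟨⟨fun x => τ (proj u v huv.ne x),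
        fun a b => Gd.Adj a b ∧ Ot (proj u v huv.ne a) (proj u v huv.ne b)⟩,
        ⟨fun a b h => h.1, ?_⟩, ?_, ?_⟩, ?_, ?_, ?_⟩
    · intro a b hab
      constructor
      · intro h h'
        exact (hor.2 _ _ (hπadj a b hab)).mp h.2 h'.2
      · intro h
        exact ⟨hab, (hor.2 _ _ (hπadj a b hab)).mpr (fun h' => h ⟨hab.symm, h'⟩)⟩
    · intro w hw
      exact hac (proj u v huv.ne w)
        (TransGen.lift (proj u v huv.ne) (fun a b (h : _ ∧ _) => h.2) _ _ hw)
    · intro a b h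
      exact hcomp _ _ h.2
    · show τ (proj u v huv.ne u) = τ (proj u v huv.ne v)
      rw [proj_u, proj_v]
    · intro h
      have h2 : TransGen Ot (proj u v huv.ne u) (proj u v huv.ne v) := TransGen.lift (proj u v huv.ne) (fun a b (h : _ ∧ _) => h.2) _ _ h
      rw [proj_u, proj_v] at h2
      exact hac _ h2
    · intro h
      have h2 : TransGen Ot (proj u v huv.ne v) (proj u v huv.ne u) := TransGen.lift (proj u v huv.ne) (fun a b (h : _ ∧ _) => h.2) _ _ h
      rw [proj_u, proj_v] at h2
      exact hac _ h2
  left_inv p := by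
    obtain ⟨⟨⟨σ, O⟩, hor, hac, hcomp⟩, hσ, huv', hvu'⟩ := p
    have htot : ∀ x y, Gd.Adj x y → O x y ∨ O y x := by
      intro x y h
      by_cases hx : O x y
      · exact Or.inl hx
      · exact Or.inr ((hor.2 y x h.symm).mpr hx)
    apply Subtype.ext; apply Subtype.ext
    refine Prod.ext ?_ ?_
    · funext x
      show σ ↑(proj u v huv.ne x) = σ x
      by_cases hx : x = v
      · rw [hx, proj_v]
        exact hσ
      · rw [proj_ne u v huv.ne hx]
    · funext a b
      apply propext
      constructor
      · rintro ⟨hGdab, hc⟩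
        by_cases ha : a = v
        · have hbu : b ≠ u := fun h => (((hGd a b).mp hGdab).2.2) ⟨ha, h⟩
          have hbv : b ≠ v := fun h => hGdab.ne (ha.trans h.symm)
          rw [ha, proj_v, proj_ne u v huv.ne hbv] at hc
          rw [ha]
          rcases hc with h1 | ⟨-, h1⟩ | ⟨h1, -⟩
          · -- O u b; need O v b
            rcases htot v b (ha ▸ hGdab) with h' | h'
            · exact h'
            · exact absurd ((TransGen.single h1).tail h') huv'
          · exact h1
          · exact absurd h1 hbu
        · by_cases hb : b = v
          · have hau : a ≠ u := fun h => (((hGd a b).mp hGdab).2.1) ⟨h, hb⟩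
            rw [hb, proj_v, proj_ne u v huv.ne ha] at hc
            rw [hb]
            rcases hc with h1 | ⟨h1, -⟩ | ⟨-, h1⟩
            · rcases htot a v (hb ▸ hGdab) with h' | h'
              · exact h'
              · exact absurd ((TransGen.single h').tail h1) hvu'
            · exact absurd h1 hau
            · exact h1
          · rw [proj_ne u v huv.ne ha, proj_ne u v huv.ne hb] at hc
            rcases hc with h1 | ⟨h1, h2⟩ | ⟨h1, h2⟩
            · exact h1
            · -- a = u, O v b : need O a b
              rcases htot a b hGdab with h' | h'
              · exact h'
              · have h1' : a = u := h1
                have h2' : O v b := h2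
                exact absurd ((TransGen.single h2').tail (by rwa [h1'] at h')) hvu'
            · -- b = u, O a v : need O a b
              rcases htot a b hGdab with h' | h'
              · exact h'
              · have h1' : b = u := h1
                have h2' : O a v := h2
                exact absurd ((TransGen.single (by rwa [h1'] at h')).tail h2') huv'
      · intro h
        have hGdab : Gd.Adj a b := hor.1 _ _ h
        refine ⟨hGdab, ?_⟩
        by_cases ha : a = v
        · have hbu : b ≠ u := fun h' => (((hGd a b).mp hGdab).2.2) ⟨ha, h'⟩
          have hbv : b ≠ v := fun h' => hGdab.ne (ha.trans h'.symm)
          rw [ha, proj_v, proj_ne u v huv.ne hbv]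
          exact Or.inr (Or.inl ⟨rfl, ha ▸ h⟩)
        · by_cases hb : b = v
          · rw [hb, proj_v, proj_ne u v huv.ne ha]
            exact Or.inr (Or.inr ⟨rfl, hb ▸ h⟩)
          · rw [proj_ne u v huv.ne ha, proj_ne u v huv.ne hb]
            exact Or.inl h
  right_inv p := by
    obtain ⟨⟨τ, Ot⟩, hor, hac, hcomp⟩ := p
    apply Subtype.ext
    refine Prod.ext ?_ ?_
    · funext a
      show τ (proj u v huv.ne ↑a) = τ a
      rw [proj_coe]
    · funext a b
      apply propext
      constructor
      · rintro (⟨-, h1⟩ | ⟨ha, -, h1⟩ | ⟨hb, -, h1⟩)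
        · rwa [proj_coe, proj_coe] at h1
        · rw [proj_v, proj_coe] at h1
          rwa [show (⟨u, huv.ne⟩ : {x : V // x ≠ v}) = a from Subtype.ext ha.symm] at h1
        · rw [proj_v, proj_coe] at h1
          rwa [show (⟨u, huv.ne⟩ : {x : V // x ≠ v}) = b from Subtype.ext hb.symm] at h1
      · intro h
        obtain ⟨hne, hG | ⟨hau, hvb⟩ | ⟨hbu, hav⟩⟩ := hor.1 _ _ h
        · have hGdab : Gd.Adj ↑a ↑b := (hGd _ _).mpr
            ⟨hG, fun h' => b.2 h'.2, fun h' => a.2 h'.1⟩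
          exact Or.inl ⟨hGdab, by rwa [proj_coe, proj_coe]⟩
        · have hGdvb : Gd.Adj v ↑b := (hGd _ _).mpr ⟨hvb, fun h' => huv.ne h'.1.symm,
            fun h' => hne (Subtype.ext (hau.trans h'.2.symm))⟩
          refine Or.inr (Or.inl ⟨hau, hGdvb, ?_⟩)
          rw [proj_v, proj_coe]
          rwa [show (⟨u, huv.ne⟩ : {x : V // x ≠ v}) = a from Subtype.ext hau.symm]
        · have hGdav : Gd.Adj ↑a v := (hGd _ _).mpr
            ⟨hav, fun h' => hne (Subtype.ext (h'.1.trans hbu.symm)), fun h' => huv.ne h'.2.symm⟩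
          refine Or.inr (Or.inr ⟨hbu, hGdav, ?_⟩)
          rw [proj_v, proj_coe]
          rwa [show (⟨u, huv.ne⟩ : {x : V // x ≠ v}) = b from Subtype.ext hbu.symm]

end Con2

section Main
open Relation Polynomial

lemma base_case {V : Type*} [Fintype V] (G : SimpleGraph V) (hE : ∀ a b, ¬ G.Adj a b) :
    ∃ P : Polynomial ℚ, (∀ c : ℕ, P.eval (c : ℚ) = Nat.card (Cols G c)) ∧
      ∀ q : ℕ, 0 < q → (Nat.card (Pairs G q) : ℚ) =
        (-1)^(Fintype.card V) * P.eval (-(q : ℚ)) := by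
  classical
  have hpairs : ∀ q : ℕ, Nat.card (Pairs G q) = q ^ Fintype.card V := by
    intro q
    have e : Pairs G q ≃ (V → Fin q) :=
      { toFun := fun p => p.1.1
        invFun := fun σ => ⟨⟨σ, fun _ _ => False⟩,
          ⟨fun a b h => h.elim, fun a b hab => absurd hab (hE a b)⟩,
          fun w hw => by cases hw with | single h => exact h | tail _ h => exact h,
          fun a b h => h.elim⟩
        left_inv := fun p => by
          obtain ⟨⟨σ, O⟩, hor, hac, hcomp⟩ := p
          apply Subtype.ext
          refine Prod.ext rfl ?_
          funext a b
          exact propext ⟨False.elim, fun h => absurd (hor.1 a b h) (hE a b)⟩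
        right_inv := fun σ => rfl }
    rw [Nat.card_congr e, Nat.card_eq_fintype_card, Fintype.card_fun, Fintype.card_fin]
  have hcols : ∀ c : ℕ, Nat.card (Cols G c) = c ^ Fintype.card V := by
    intro c
    rw [Nat.card_congr (Equiv.subtypeUnivEquiv (fun f a b hab => absurd hab (hE a b))),
      Nat.card_eq_fintype_card, Fintype.card_fun, Fintype.card_fin]
  refine ⟨Polynomial.X ^ Fintype.card V, ?_, ?_⟩
  · intro c
    rw [hcols c]
    push_cast
    simp
  · intro q hq
    rw [hpairs q]
    rw [eval_pow, eval_X, ← mul_pow]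
    push_cast
    ring

universe u

lemma main_lemma : ∀ (a : ℕ) (V : Type u) [Fintype V], Fintype.card V ≤ a →
    ∀ (b : ℕ) (G : SimpleGraph V), Nat.card G.edgeSet ≤ b →
    ∃ P : Polynomial ℚ, (∀ c : ℕ, P.eval (c : ℚ) = Nat.card (Cols G c)) ∧
      ∀ q : ℕ, 0 < q → (Nat.card (Pairs G q) : ℚ) =
        (-1)^(Fintype.card V) * P.eval (-(q : ℚ)) := by
  intro a
  induction a with
  | zero =>
    intro V _ hV b G hb
    refine base_case G (fun x y h => ?_)
    have : 0 < Fintype.card V := Fintype.card_pos_iff.mpr ⟨x⟩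
    omega
  | succ a ih =>
    intro V _ hV b
    induction b with
    | zero =>
      intro G hb
      refine base_case G (fun x y h => ?_)
      have hmem : (s(x,y) : Sym2 V) ∈ G.edgeSet := G.mem_edgeSet.mpr h
      have : Finite G.edgeSet := Set.toFinite _
      have hpos : 0 < Nat.card G.edgeSet := Nat.card_pos_iff.mpr ⟨⟨_, hmem⟩, this⟩
      omega
    | succ b ihb =>
      intro G hb
      by_cases hE : ∀ x y, ¬ G.Adj x y
      · exact base_case G hE
      · push_neg at hE
        obtain ⟨u, v, huv⟩ := hE
        classical
        set Gd := G.deleteEdges {s(u,v)} with hGddef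
        have hGd : ∀ x y, Gd.Adj x y ↔ G.Adj x y ∧ ¬(x = u ∧ y = v) ∧ ¬(x = v ∧ y = u) := by
          intro x y
          rw [hGddef, SimpleGraph.deleteEdges_adj]
          simp only [Set.mem_singleton_iff, Sym2.eq_iff]
          tauto
        have hbd : Nat.card Gd.edgeSet ≤ b := by
          have h1 : Gd.edgeSet = G.edgeSet \ {s(u,v)} := SimpleGraph.edgeSet_deleteEdges _
          have hmem : (s(u,v) : Sym2 V) ∈ G.edgeSet := G.mem_edgeSet.mpr huv
          rw [h1, Nat.card_coe_set_eq, Set.ncard_diff_singleton_of_mem hmem]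
          rw [Nat.card_coe_set_eq] at hb
          have hpos : 0 < G.edgeSet.ncard := by
            rw [Set.ncard_pos (Set.toFinite _)]
            exact ⟨_, hmem⟩
          omega
        have hcardV' : Fintype.card {x : V // x ≠ v} = Fintype.card V - 1 := by
          have e : Fintype.card {x : V // x ≠ v} = Fintype.card {x : V // ¬ x = v} :=
            Fintype.card_congr (Equiv.subtypeEquivRight (fun _ => Iff.rfl))
          rw [e, Fintype.card_subtype_compl, Fintype.card_subtype_eq]
        have hposV : 0 < Fintype.card V := Fintype.card_pos_iff.mpr ⟨v⟩
        have hV' : Fintype.card {x : V // x ≠ v} ≤ a := by omega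
        obtain ⟨Pd, hPd, hQd⟩ := ihb Gd hbd
        obtain ⟨Pc, hPc, hQc⟩ := ih {x : V // x ≠ v} hV'
          (Nat.card (Contract G u v).edgeSet) (Contract G u v) le_rfl
        refine ⟨Pd - Pc, ?_, ?_⟩
        · intro c
          have hsplit := card_cols G Gd u v c huv hGd
          have hsplit' : (Nat.card (Cols Gd c) : ℚ) =
              (Nat.card (Cols G c) : ℚ) + (Nat.card (Cols (Contract G u v) c) : ℚ) := by
            exact_mod_cast congrArg (Nat.cast : ℕ → ℚ) hsplit
          rw [eval_sub, hPd c, hPc c]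
          linarith
        · intro q hq
          have hsplit := card_pairs G Gd u v q huv hGd
          have hcon := Nat.card_congr (pairEquivCon G Gd u v q huv hGd)
          have hrank : Fintype.card V = Fintype.card {x : V // x ≠ v} + 1 := by omega
          have step : (Nat.card (Pairs G q) : ℚ) =
              (Nat.card (Pairs Gd q) : ℚ) +
              (Nat.card (Pairs (Contract G u v) q) : ℚ) := by
            rw [← hcon]
            exact_mod_cast congrArg (Nat.cast : ℕ → ℚ) hsplit
          rw [step, hQd q hq, hQc q hq, hrank, eval_sub, pow_succ]
          ring

end Main

/-- Stanley's reciprocity theorem: the number of `q`-compatible pairs `(σ, O)`,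
where `O` is an acyclic orientation of `G` and `σ : V → {1,…,q}` satisfies `σ i ≥ σ j` for
every directed edge `i → j` of `O`, equals `(-1)^{|V|} · π_G(-q)`, where `π_G` is the
chromatic polynomial of `G` (characterized by its values at natural numbers). -/
theorem stmt4 {V : Type*} [Fintype V] (G : SimpleGraph V) (q : ℕ) (hq : 0 < q)
    (P : Polynomial ℚ)
    (hP : ∀ c : ℕ, P.eval (c : ℚ) =
      Nat.card {f : V → Fin c // ∀ u v, G.Adj u v → f u ≠ f v}) :
    (Nat.card {p : (V → Fin q) × (V → V → Prop) //
        IsOrientation G p.2 ∧ IsAcyclicRel p.2 ∧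
        ∀ u v, p.2 u v → p.1 v ≤ p.1 u} : ℚ) =
      (-1) ^ (Fintype.card V) * P.eval (-(q : ℚ)) := by
  classical
  obtain ⟨P₀, hP₀, hQ₀⟩ := main_lemma (Fintype.card V) V le_rfl
    (Nat.card G.edgeSet) G le_rfl
  have hPP : P = P₀ := by
    apply Polynomial.eq_of_infinite_eval_eq
    apply Set.infinite_of_injective_forall_mem
      (f := fun c : ℕ => (c : ℚ)) Nat.cast_injective
    intro c
    simp only [Set.mem_setOf_eq]
    rw [hP c, hP₀ c]
  rw [hPP]
  exact hQ₀ q hq
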